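/- arXiv:1902.11239 — 2 statements merged into one kernel-verified Lean document; each statement's English description precedes it below -/
import Mathlib

section
/- Let X_1,…,X_n each take values in a set of cardinality m ≥ 2, with n ≥ 3. If X_1 is uniform and X_1 = X_2 = … = X_n almost surely, then Ω(X^n) = (n−2) log m; and if X_1,…,X_{n−1} are i.i.d. uniform on ℤ/mℤ and X_n = Σ_{j=1}^{n−1} X_j (mod m) almost surely, then Ω(X^n) = (2−n) log m. -/
open Finset

noncomputable section

variable {Ω : Type*} [Fintype Ω]

/-- Probability of the event `A ⊆ Ω` under the probability mass function `p`. -/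
def probOf (p : Ω → ℝ) (A : Finset Ω) : ℝ := ∑ ω ∈ A, p ω

/-- Shannon entropy (in bits, i.e. logarithm base 2) of the discrete random
variable `X` defined on the finite probability space with mass function `p`. -/
def shEnt {S : Type*} [Fintype S] [DecidableEq S] (p : Ω → ℝ) (X : Ω → S) : ℝ :=
  -∑ s : S, probOf p (univ.filter fun ω => X ω = s) *
      Real.logb 2 (probOf p (univ.filter fun ω => X ω = s))

/-- Mutual information `I(X;Y)`. -/
def mutInfo {S T : Type*} [Fintype S] [DecidableEq S] [Fintype T] [DecidableEq T]
    (p : Ω → ℝ) (X : Ω → S) (Y : Ω → T) : ℝ :=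
  shEnt p X + shEnt p Y - shEnt p (fun ω => (X ω, Y ω))

/-- Conditional mutual information `I(X;Y∣Z)`. -/
def condMutInfo {S T U : Type*} [Fintype S] [DecidableEq S] [Fintype T] [DecidableEq T]
    [Fintype U] [DecidableEq U] (p : Ω → ℝ) (X : Ω → S) (Y : Ω → T) (Z : Ω → U) : ℝ :=
  shEnt p (fun ω => (X ω, Z ω)) + shEnt p (fun ω => (Y ω, Z ω))
    - shEnt p (fun ω => (X ω, Y ω, Z ω)) - shEnt p Z

variable {n : ℕ} {S : Fin n → Type*} [∀ i, Fintype (S i)] [∀ i, DecidableEq (S i)]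

/-- The sub-vector `X^γ` of the tuple of random variables `X`. -/
def restrict (X : ∀ i, Ω → S i) (γ : Finset (Fin n)) : Ω → ∀ i : γ, S i.1 :=
  fun ω i => X i.1 ω

/-- Joint Shannon entropy `H(X^γ)` of the sub-vector indexed by `γ`. -/
def subEnt (p : Ω → ℝ) (X : ∀ i, Ω → S i) (γ : Finset (Fin n)) : ℝ :=
  shEnt p (restrict X γ)

/-- Total correlation `C(X^γ)`: sum of marginal entropies minus joint entropy. -/
def totCorr (p : Ω → ℝ) (X : ∀ i, Ω → S i) (γ : Finset (Fin n)) : ℝ :=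
  (∑ i ∈ γ, shEnt p (X i)) - subEnt p X γ

/-- Binding entropy `B(X^γ)`: joint entropy minus the sum of the residual
entropies `R_j = H(X_j ∣ X^γ_{-j})` (each conditional entropy being a
difference of joint entropies). -/
def bindEnt (p : Ω → ℝ) (X : ∀ i, Ω → S i) (γ : Finset (Fin n)) : ℝ :=
  subEnt p X γ - ∑ i ∈ γ, (subEnt p X γ - subEnt p X (γ.erase i))

/-- The O-information `Ω(X^γ) = C(X^γ) - B(X^γ)`. -/
def oInfo (p : Ω → ℝ) (X : ∀ i, Ω → S i) (γ : Finset (Fin n)) : ℝ :=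
  totCorr p X γ - bindEnt p X γ

lemma p_eq_zero_of_probOf {p : Ω → ℝ} (hp : ∀ ω, 0 ≤ p ω) {A : Finset Ω}
    (h : probOf p A = 0) {ω : Ω} (hω : ω ∈ A) : p ω = 0 :=
  le_antisymm (h ▸ Finset.single_le_sum (fun ω _ => hp ω) hω) (hp ω)

lemma probOf_congr {p : Ω → ℝ} (hp : ∀ ω, 0 ≤ p ω) {A : Finset Ω}
    (hA : probOf p A = 0) {E : Ω → Prop} (hE : ∀ ω, ¬ E ω → ω ∈ A)
    {S : Type*} [DecidableEq S] (X Y : Ω → S) (hXY : ∀ ω, E ω → X ω = Y ω) (s : S) :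
    probOf p (univ.filter fun ω => X ω = s) = probOf p (univ.filter fun ω => Y ω = s) := by
  unfold probOf
  rw [Finset.sum_filter, Finset.sum_filter]
  refine Finset.sum_congr rfl fun ω _ => ?_
  by_cases hω : E ω
  · rw [hXY ω hω]
  · have h0 : p ω = 0 := p_eq_zero_of_probOf hp hA (hE ω hω)
    simp [h0]

lemma shEnt_congr {S : Type*} [Fintype S] [DecidableEq S] (p : Ω → ℝ) (X Y : Ω → S)
    (h : ∀ s, probOf p (univ.filter fun ω => X ω = s)
      = probOf p (univ.filter fun ω => Y ω = s)) :
    shEnt p X = shEnt p Y := by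
  unfold shEnt; simp only [h]

lemma shEnt_congr_ae {p : Ω → ℝ} (hp : ∀ ω, 0 ≤ p ω) {A : Finset Ω}
    (hA : probOf p A = 0) {E : Ω → Prop} (hE : ∀ ω, ¬ E ω → ω ∈ A)
    {S : Type*} [Fintype S] [DecidableEq S] (X Y : Ω → S) (hXY : ∀ ω, E ω → X ω = Y ω) :
    shEnt p X = shEnt p Y :=
  shEnt_congr p X Y (probOf_congr hp hA hE X Y hXY)

lemma probOf_comp {A B : Type*} [Fintype A] [DecidableEq A] [DecidableEq B] (p : Ω → ℝ)
    (Y : Ω → A) (g : A → B) (b : B) :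
    probOf p (univ.filter fun ω => g (Y ω) = b)
      = ∑ a ∈ univ.filter (fun a => g a = b), probOf p (univ.filter fun ω => Y ω = a) := by
  unfold probOf
  rw [Finset.sum_fiberwise_eq_sum_filter univ (univ.filter fun a => g a = b) Y p]
  apply Finset.sum_congr _ (fun _ _ => rfl)
  ext ω; simp

lemma sum_probOf {A : Type*} [Fintype A] [DecidableEq A] (p : Ω → ℝ) (Y : Ω → A) :
    ∑ a, probOf p (univ.filter fun ω => Y ω = a) = ∑ ω, p ω := by
  unfold probOf
  rw [Finset.sum_fiberwise_eq_sum_filter univ univ Y p]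
  simp

lemma shEnt_comp_inj {A B : Type*} [Fintype A] [DecidableEq A] [Fintype B] [DecidableEq B]
    (p : Ω → ℝ) (Y : Ω → A) (g : A → B) (hg : Function.Injective g) :
    shEnt p (fun ω => g (Y ω)) = shEnt p Y := by
  unfold shEnt
  congr 1
  have key : ∀ F : B → ℝ, (∀ b, b ∉ univ.image g → F b = 0) →
      ∑ b : B, F b = ∑ a : A, F (g a) := by
    intro F hF
    rw [← Finset.sum_subset (Finset.subset_univ (univ.image g)) (fun b _ hb => hF b hb)]
    exact Finset.sum_image fun a _ a' _ h => hg h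
  rw [key]
  · refine Finset.sum_congr rfl fun a _ => ?_
    have h2 : (univ.filter fun ω => g (Y ω) = g a) = (univ.filter fun ω => Y ω = a) := by
      ext ω; simp [hg.eq_iff]
    rw [h2]
  · intro b hb
    have h2 : (univ.filter fun ω => g (Y ω) = b) = ∅ := by
      ext ω; simp only [Finset.mem_filter, Finset.mem_univ, true_and, Finset.notMem_empty,
        iff_false]
      intro h; exact hb (Finset.mem_image.2 ⟨Y ω, Finset.mem_univ _, h⟩)
    rw [h2]
    simp [probOf]

lemma shEnt_const_dist {B : Type*} [Fintype B] [DecidableEq B] {p : Ω → ℝ}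
    (hp1 : ∑ ω, p ω = 1) (Z : Ω → B) (c : ℝ)
    (h : ∀ b, probOf p (univ.filter fun ω => Z ω = b) = c) :
    shEnt p Z = Real.logb 2 (Fintype.card B) := by
  have hcard : (Fintype.card B : ℝ) * c = 1 := by
    have := sum_probOf p Z
    rw [hp1] at this
    simp only [h, Finset.sum_const, card_univ, nsmul_eq_mul] at this
    exact this
  have hB : (0:ℝ) < Fintype.card B := by
    rcases Nat.eq_zero_or_pos (Fintype.card B) with h0 | h0
    · rw [h0] at hcard; norm_num at hcard
    · exact_mod_cast h0
  have hc : c = ((Fintype.card B : ℝ))⁻¹ := by field_simp; linarith [hcard]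
  unfold shEnt
  simp only [h, hc, Finset.sum_const, card_univ, nsmul_eq_mul, Real.logb_inv]
  field_simp

lemma card_fiber_eq {A B : Type*} [Fintype A] [DecidableEq A] [DecidableEq B]
    [AddCommGroup A] [AddCommGroup B] (e : A → B) (he : ∀ u v, e (u + v) = e u + e v)
    (hsurj : ∀ d : B, ∃ w, e w = d) (b b' : B) :
    (univ.filter fun a => e a = b).card = (univ.filter fun a => e a = b').card := by
  obtain ⟨w, hw⟩ := hsurj (b' - b)
  apply Finset.card_bij' (fun a _ => a + w) (fun a _ => a - w)
  · intro a ha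
    simp only [Finset.mem_filter, Finset.mem_univ, true_and] at ha ⊢
    rw [he, ha, hw]; abel
  · intro a ha
    simp only [Finset.mem_filter, Finset.mem_univ, true_and] at ha ⊢
    have h2 : e (a - w) + e w = e a := by rw [← he, sub_add_cancel]
    rw [hw, ha] at h2
    have := eq_sub_of_add_eq h2
    rw [this]; abel
  · intro a _; abel
  · intro a _; abel

lemma probOf_comp_card {A B : Type*} [Fintype A] [DecidableEq A] [DecidableEq B]
    (p : Ω → ℝ) (Y : Ω → A) (q : ℝ)
    (hY : ∀ a, probOf p (univ.filter fun ω => Y ω = a) = q) (g : A → B) (b : B) :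
    probOf p (univ.filter fun ω => g (Y ω) = b)
      = (univ.filter fun a => g a = b).card * q := by
  rw [probOf_comp p Y g b]
  rw [Finset.sum_congr rfl fun a _ => hY a, Finset.sum_const, nsmul_eq_mul]

/-- for variables over alphabets of cardinality `m ≥ 2` and
`n ≥ 3`: if `X_1` is uniform and `X_1 = … = X_n` almost surely then
`Ω(X^n) = (n-2)·log m`; and if `X_1,…,X_{n-1}` are i.i.d. uniform on `ℤ/mℤ`
and `X_n = Σ_{j<n} X_j (mod m)` almost surely then `Ω(X^n) = (2-n)·log m`
(logarithms base 2; last index is `n-1` in the 0-based indexing used here). -/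
theorem oInfo_extremes_general_alphabet
    (p : Ω → ℝ) (hp : ∀ ω, 0 ≤ p ω) (hp1 : ∑ ω, p ω = 1)
    (n m : ℕ) [NeZero m] (hn : 3 ≤ n) (hm : 2 ≤ m) :
    (∀ (T : Type) [Fintype T] [DecidableEq T] (X : Fin n → Ω → T),
        Fintype.card T = m →
        (∀ a : T,
          probOf p (Finset.univ.filter fun ω => X ⟨0, by omega⟩ ω = a) = 1 / (m : ℝ)) →
        probOf p (Finset.univ.filter fun ω => ¬ ∀ i, X i ω = X ⟨0, by omega⟩ ω) = 0 →
        oInfo p (fun i => X i) Finset.univ = ((n : ℝ) - 2) * Real.logb 2 (m : ℝ))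
    ∧ (∀ X : Fin n → Ω → ZMod m,
        (∀ v : Fin n → ZMod m,
          probOf p (Finset.univ.filter fun ω =>
              ∀ i, i ≠ (⟨n - 1, by omega⟩ : Fin n) → X i ω = v i)
            = (1 / (m : ℝ)) ^ (n - 1)) →
        probOf p (Finset.univ.filter fun ω =>
            ¬ (X ⟨n - 1, by omega⟩ ω
                = ∑ i ∈ Finset.univ.erase (⟨n - 1, by omega⟩ : Fin n), X i ω)) = 0 →
        oInfo p (fun i => X i) Finset.univ = (2 - (n : ℝ)) * Real.logb 2 (m : ℝ)) := by
  constructor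
  ·
    intro T _ _ X hcard hunif hnull
    set z : Fin n := ⟨0, by omega⟩ with hz
    set L := Real.logb 2 (m : ℝ) with hL
    have hE : ∀ ω : Ω, ¬ (∀ i, X i ω = X z ω) →
        ω ∈ (Finset.univ.filter fun ω => ¬ ∀ i, X i ω = X z ω) := by
      intro ω h; exact Finset.mem_filter.2 ⟨mem_univ ω, h⟩
    -- marginal entropies
    have hz0 : shEnt p (X z) = L := by
      rw [shEnt_const_dist hp1 (X z) (1/(m:ℝ)) hunif, hcard]
    have hmarg : ∀ i, shEnt p (X i) = L := by
      intro i
      rw [shEnt_congr_ae hp hnull hE (X i) (X z) (fun ω h => h i)]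
      exact hz0
    -- joint entropies
    have hsub : ∀ γ : Finset (Fin n), γ.Nonempty →
        subEnt p (fun i => X i) γ = L := by
      intro γ hγ
      obtain ⟨j0, hj0⟩ := hγ
      have hdiag : Function.Injective (fun (a : T) => (fun _ : γ => a : ∀ i : γ, T)) :=
        fun a b h => congrFun h ⟨j0, hj0⟩
      have h1 : subEnt p (fun i => X i) γ
          = shEnt p (fun ω => (fun _ : γ => X z ω : ∀ i : γ, T)) := by
        apply shEnt_congr_ae hp hnull hE
        intro ω h
        funext i
        exact h i.1
      rw [h1, shEnt_comp_inj p (X z) _ hdiag, hz0]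
    have huniv : subEnt p (fun i => X i) (univ : Finset (Fin n)) = L :=
      hsub univ ⟨z, mem_univ z⟩
    have herase : ∀ i : Fin n, subEnt p (fun i => X i) (univ.erase i) = L := by
      intro i
      apply hsub
      have h2 : 0 < (univ.erase i).card := by
        rw [Finset.card_erase_of_mem (mem_univ i), Finset.card_univ, Fintype.card_fin]
        omega
      exact Finset.card_pos.mp h2
    unfold oInfo totCorr bindEnt
    simp only [hmarg, huniv, herase, sub_self, Finset.sum_const, Finset.card_univ,
      Fintype.card_fin, smul_zero, nsmul_eq_mul, Finset.sum_const_zero]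
    ring
  ·
    intro X hU hnull
    have hle : n - 1 ≤ n := by omega
    set l : Fin n := ⟨n - 1, by omega⟩ with hldef
    set L := Real.logb 2 (m : ℝ) with hLdef
    set q : ℝ := (1 / (m : ℝ)) ^ (n - 1) with hqdef
    set Y : Ω → (Fin (n-1) → ZMod m) := fun ω k => X (Fin.castLE hle k) ω with hYdef
    set G : (Fin (n-1) → ZMod m) → (Fin n → ZMod m) :=
      fun u i => if h : (i : ℕ) < n - 1 then u ⟨i.1, h⟩ else ∑ k, u k with hGdef
    -- reindexing sums over `univ.erase l`
    have himg : (univ.erase l) = Finset.image (Fin.castLE hle) univ := by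
      ext i
      constructor
      · intro h
        have h1 := (Finset.mem_erase.1 h).1
        have h2 : (i : ℕ) < n - 1 := by
          have := i.isLt
          have h3 : (i : ℕ) ≠ n - 1 := fun hc => h1 (Fin.ext hc)
          omega
        exact Finset.mem_image.2 ⟨⟨i.1, h2⟩, Finset.mem_univ _, rfl⟩
      · intro h
        obtain ⟨k, _, rfl⟩ := Finset.mem_image.1 h
        refine Finset.mem_erase.2 ⟨?_, Finset.mem_univ _⟩
        intro hc
        have := k.isLt
        have h3 : ((Fin.castLE hle k : Fin n) : ℕ) = n - 1 := congrArg Fin.val hc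
        simp only [Fin.coe_castLE] at h3
        omega
    have hre : ∀ f : Fin n → ZMod m,
        ∑ i ∈ univ.erase l, f i = ∑ k : Fin (n-1), f (Fin.castLE hle k) := by
      intro f
      rw [himg, Finset.sum_image (fun a _ b _ h => Fin.castLE_injective hle h)]
    -- a.s. event
    have hE : ∀ ω : Ω, ¬ (X l ω = ∑ i ∈ univ.erase l, X i ω) →
        ω ∈ (Finset.univ.filter fun ω =>
          ¬ (X l ω = ∑ i ∈ Finset.univ.erase l, X i ω)) := by
      intro ω h
      exact Finset.mem_filter.2 ⟨Finset.mem_univ ω, h⟩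
    -- off the null event, everything is a function of Y
    have hGY : ∀ ω : Ω, (X l ω = ∑ i ∈ univ.erase l, X i ω) → ∀ i, X i ω = G (Y ω) i := by
      intro ω hω i
      by_cases h : (i : ℕ) < n - 1
      · have h2 : Fin.castLE hle ⟨i.1, h⟩ = i := Fin.ext rfl
        simp only [hGdef, dif_pos h, hYdef]
        rw [h2]
      · have hi : i = l := Fin.ext (by have := i.isLt; simp only [hldef]; omega)
        subst hi
        rw [hω, hre (fun j => X j ω)]
        simp only [hGdef, dif_neg h]
        rfl
    -- distribution of Y
    have hYdist : ∀ u, probOf p (univ.filter fun ω => Y ω = u) = q := by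
      intro u
      have hset : (univ.filter fun ω => Y ω = u)
          = (univ.filter fun ω => ∀ i, i ≠ l → X i ω = G u i) := by
        ext ω
        simp only [Finset.mem_filter, Finset.mem_univ, true_and]
        constructor
        · intro h i hi
          have h2 : (i : ℕ) < n - 1 := by
            have := i.isLt
            have h3 : (i : ℕ) ≠ n - 1 := fun hc => hi (Fin.ext hc)
            omega
          have h4 : Fin.castLE hle ⟨i.1, h2⟩ = i := Fin.ext rfl
          simp only [hGdef, dif_pos h2]
          rw [← h, hYdef]
          simp only [h4]
        · intro h
          funext k
          have hk : Fin.castLE hle k ≠ l := by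
            intro hc
            have := k.isLt
            have h3 : ((Fin.castLE hle k : Fin n) : ℕ) = n - 1 := congrArg Fin.val hc
            simp only [Fin.coe_castLE] at h3
            omega
          have h5 := h (Fin.castLE hle k) hk
          have h6 : ((Fin.castLE hle k : Fin n) : ℕ) < n - 1 := k.isLt
          simp only [hGdef, dif_pos h6] at h5
          simpa [hYdef] using h5
      rw [hset]
      exact hU (G u)
    -- entropy of Y
    have hcardA : (Fintype.card (Fin (n-1) → ZMod m) : ℝ) = (m : ℝ) ^ (n-1) := by
      rw [Fintype.card_fun, ZMod.card, Fintype.card_fin]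
      push_cast
      ring
    have hYent : shEnt p Y = ((n : ℝ) - 1) * L := by
      rw [shEnt_const_dist hp1 Y q hYdist, hcardA, hLdef, Real.logb_pow]
      have : ((n - 1 : ℕ) : ℝ) = (n : ℝ) - 1 := by
        have : 1 ≤ n := by omega
        push_cast [this]
        ring
      rw [this]
    -- joint entropies via injections
    have hsubE : ∀ γ : Finset (Fin n),
        Function.Injective (fun (u : Fin (n-1) → ZMod m) => (fun j : γ => G u j.1)) →
        subEnt p (fun i => X i) γ = ((n : ℝ) - 1) * L := by
      intro γ hinj
      have h1 : subEnt p (fun i => X i) γ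
          = shEnt p (fun ω => (fun j : γ => G (Y ω) j.1)) := by
        apply shEnt_congr_ae hp hnull hE
        intro ω h
        funext j
        exact hGY ω h j.1
      rw [h1, shEnt_comp_inj p Y _ hinj, hYent]
    have hinjA : ∀ γ : Finset (Fin n), (∀ k : Fin (n-1), Fin.castLE hle k ∈ γ) →
        Function.Injective (fun (u : Fin (n-1) → ZMod m) => (fun j : γ => G u j.1)) := by
      intro γ hγ u u' h
      funext k
      have hc : ((Fin.castLE hle k : Fin n) : ℕ) < n - 1 := k.isLt
      have h2 := congrFun h ⟨Fin.castLE hle k, hγ k⟩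
      simp only [hGdef, dif_pos hc] at h2
      exact h2
    have huniv : subEnt p (fun i => X i) univ = ((n : ℝ) - 1) * L :=
      hsubE univ (hinjA univ fun k => Finset.mem_univ _)
    have herase : ∀ i : Fin n,
        subEnt p (fun i => X i) (univ.erase i) = ((n : ℝ) - 1) * L := by
      intro i
      by_cases hi : i = l
      · subst hi
        apply hsubE
        apply hinjA
        intro k
        refine Finset.mem_erase.2 ⟨?_, Finset.mem_univ _⟩
        intro hc
        have := k.isLt
        have h3 : ((Fin.castLE hle k : Fin n) : ℕ) = n - 1 := congrArg Fin.val hc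
        simp only [Fin.coe_castLE] at h3
        omega
      · -- i ≠ l
        have hiv : (i : ℕ) < n - 1 := by
          have := i.isLt
          have h3 : (i : ℕ) ≠ n - 1 := fun hc => hi (Fin.ext hc)
          omega
        set i' : Fin (n-1) := ⟨i.1, hiv⟩ with hi'def
        apply hsubE
        intro u u' h
        have hl_mem : l ∈ univ.erase i := Finset.mem_erase.2 ⟨fun hc => hi hc.symm, Finset.mem_univ _⟩
        have hsum : ∑ k, u k = ∑ k, u' k := by
          have h2 := congrFun h ⟨l, hl_mem⟩
          have h3 : ¬ ((l : ℕ) < n - 1) := by simp [hldef]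
          simpa only [hGdef, dif_neg h3] using h2
        have hk : ∀ k : Fin (n-1), k ≠ i' → u k = u' k := by
          intro k hk
          have hmem : Fin.castLE hle k ∈ univ.erase i := by
            refine Finset.mem_erase.2 ⟨?_, Finset.mem_univ _⟩
            intro hc
            apply hk
            apply Fin.ext
            have := congrArg Fin.val hc
            simpa using this
          have h2 := congrFun h ⟨Fin.castLE hle k, hmem⟩
          have hc : ((Fin.castLE hle k : Fin n) : ℕ) < n - 1 := k.isLt
          simp only [hGdef, dif_pos hc] at h2
          exact h2
        funext k
        by_cases hki : k = i'
        · have h4 : ∑ j ∈ univ.erase i', u j = ∑ j ∈ univ.erase i', u' j :=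
            Finset.sum_congr rfl fun j hj => hk j (Finset.mem_erase.1 hj).1
          have h5 : u i' + ∑ j ∈ univ.erase i', u j = u' i' + ∑ j ∈ univ.erase i', u' j := by
            rw [Finset.add_sum_erase _ _ (Finset.mem_univ i'),
              Finset.add_sum_erase _ _ (Finset.mem_univ i')]
            exact hsum
          rw [h4] at h5
          rw [hki]
          exact add_right_cancel h5
        · exact hk k hki
    -- marginal entropies
    have hmarg : ∀ i : Fin n, shEnt p (X i) = L := by
      intro i
      have h1 : shEnt p (X i) = shEnt p (fun ω => G (Y ω) i) := by
        apply shEnt_congr_ae hp hnull hE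
        intro ω h
        exact hGY ω h i
      have hadd : ∀ u v, G (u + v) i = G u i + G v i := by
        intro u v
        by_cases h : (i : ℕ) < n - 1
        · simp only [hGdef, dif_pos h]; rfl
        · simp only [hGdef, dif_neg h]
          exact Finset.sum_add_distrib
      have hsurj : ∀ d : ZMod m, ∃ w, G w i = d := by
        intro d
        by_cases h : (i : ℕ) < n - 1
        · refine ⟨fun k => if k = ⟨i.1, h⟩ then d else 0, ?_⟩
          simp [hGdef, dif_pos h]
        · refine ⟨fun k => if k = ⟨0, by omega⟩ then d else 0, ?_⟩
          simp only [hGdef, dif_neg h]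
          rw [Finset.sum_ite_eq' univ (⟨0, by omega⟩ : Fin (n-1)) (fun _ => d)]
          simp
      have hconst : ∀ b : ZMod m, probOf p (univ.filter fun ω => G (Y ω) i = b)
          = ((univ.filter fun u : Fin (n-1) → ZMod m => G u i = 0).card : ℝ) * q := by
        intro b
        have h2 := probOf_comp_card p Y q hYdist (fun u => G u i) b
        rw [h2, card_fiber_eq (fun u => G u i) hadd hsurj b 0]
      rw [h1, shEnt_const_dist hp1 _ _ hconst, ZMod.card]
    -- final arithmetic
    unfold oInfo totCorr bindEnt
    simp only [hmarg, huniv, herase, sub_self, Finset.sum_const, Finset.card_univ,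
      Fintype.card_fin, smul_zero, nsmul_eq_mul, Finset.sum_const_zero]
    ring
end
end

section
/- Let |𝒳| be the maximum alphabet cardinality of X_1,…,X_n and let 1 ≤ m ≤ n−1. If Ω(X^n) ≥ 0, then for every subset γ ⊆ {1,…,n} with |γ| = m one has C(X^γ) ≥ Ω(X^n) − (n−m−1) log|𝒳|. -/
open Finset

noncomputable section

variable {Ω : Type*} [Fintype Ω]

set_option linter.unusedSectionVars false

section Aux

set_option linter.unusedSectionVars false

variable {S T U : Type*} [Fintype S] [DecidableEq S] [Fintype T] [DecidableEq T]
  [Fintype U] [DecidableEq U]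

/-- fiber probability -/
def fpr (p : Ω → ℝ) (X : Ω → S) (s : S) : ℝ :=
  probOf p (univ.filter fun ω => X ω = s)

lemma fpr_nonneg (p : Ω → ℝ) (hp : ∀ ω, 0 ≤ p ω) (X : Ω → S) (s : S) : 0 ≤ fpr p X s :=
  Finset.sum_nonneg fun ω _ => hp ω

lemma shEnt_eq (p : Ω → ℝ) (X : Ω → S) :
    shEnt p X = -∑ s : S, fpr p X s * Real.logb 2 (fpr p X s) := rfl

lemma fpr_eq_sum_ite (p : Ω → ℝ) (X : Ω → S) (s : S) :
    fpr p X s = ∑ ω, if X ω = s then p ω else 0 := by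
  rw [fpr, probOf, Finset.sum_filter]

lemma sum_fpr (p : Ω → ℝ) (X : Ω → S) : ∑ s, fpr p X s = ∑ ω, p ω := by
  simp_rw [fpr_eq_sum_ite]
  rw [Finset.sum_comm]
  exact Finset.sum_congr rfl fun ω _ => by simp

lemma self_le_fpr (p : Ω → ℝ) (hp : ∀ ω, 0 ≤ p ω) (X : Ω → S) (ω : Ω) :
    p ω ≤ fpr p X (X ω) :=
  Finset.single_le_sum (fun ω _ => hp ω) (by simp)

lemma shEnt_eq_sum_omega (p : Ω → ℝ) (X : Ω → S) :
    shEnt p X = -∑ ω, p ω * Real.logb 2 (fpr p X (X ω)) := by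
  rw [shEnt_eq]
  congr 1
  have key : ∀ s ω, (if X ω = s then p ω else 0) * Real.logb 2 (fpr p X s)
      = if X ω = s then p ω * Real.logb 2 (fpr p X (X ω)) else 0 := by
    intro s ω; split <;> simp_all
  calc ∑ s, fpr p X s * Real.logb 2 (fpr p X s)
      = ∑ s, ∑ ω, (if X ω = s then p ω else 0) * Real.logb 2 (fpr p X s) := by
        simp_rw [fpr_eq_sum_ite, Finset.sum_mul]
    _ = ∑ ω, ∑ s, (if X ω = s then p ω * Real.logb 2 (fpr p X (X ω)) else 0) := by
        simp_rw [key]; rw [Finset.sum_comm]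
    _ = ∑ ω, p ω * Real.logb 2 (fpr p X (X ω)) :=
        Finset.sum_congr rfl fun ω _ => by simp

lemma shEnt_mono (p : Ω → ℝ) (hp : ∀ ω, 0 ≤ p ω) (X : Ω → S) (Y : Ω → T)
    (h : ∀ ω ω', Y ω = Y ω' → X ω = X ω') : shEnt p X ≤ shEnt p Y := by
  rw [shEnt_eq_sum_omega, shEnt_eq_sum_omega, neg_le_neg_iff]
  apply Finset.sum_le_sum
  intro ω _
  rcases eq_or_lt_of_le (hp ω) with h0 | h0
  · rw [← h0]; simp
  · have h1 : fpr p Y (Y ω) ≤ fpr p X (X ω) := by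
      apply Finset.sum_le_sum_of_subset_of_nonneg
      · intro ω' hω'
        simp only [Finset.mem_filter, Finset.mem_univ, true_and] at *
        exact h ω' ω hω'
      · exact fun ω' _ _ => hp ω'
    have h2 : 0 < fpr p Y (Y ω) := lt_of_lt_of_le h0 (self_le_fpr p hp Y ω)
    exact mul_le_mul_of_nonneg_left (Real.logb_le_logb_of_le one_lt_two h2 h1) h0.le

lemma shEnt_congr_s13 (p : Ω → ℝ) (hp : ∀ ω, 0 ≤ p ω) (X : Ω → S) (Y : Ω → T)
    (h : ∀ ω ω', X ω = X ω' ↔ Y ω = Y ω') : shEnt p X = shEnt p Y :=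
  le_antisymm (shEnt_mono p hp X Y fun ω ω' hy => (h ω ω').2 hy)
    (shEnt_mono p hp Y X fun ω ω' hx => (h ω ω').1 hx)

lemma fpr_congr (p : Ω → ℝ) {A : Ω → S} {B : Ω → T} {a : S} {b : T}
    (h : ∀ ω, A ω = a ↔ B ω = b) : fpr p A a = fpr p B b := by
  unfold fpr probOf
  congr 1
  exact Finset.filter_congr fun ω _ => h ω

lemma fpr_mono (p : Ω → ℝ) (hp : ∀ ω, 0 ≤ p ω) {A : Ω → S} {B : Ω → T} {a : S} {b : T}
    (h : ∀ ω, A ω = a → B ω = b) : fpr p A a ≤ fpr p B b := by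
  apply Finset.sum_le_sum_of_subset_of_nonneg
  · intro ω hω
    simp only [Finset.mem_filter, Finset.mem_univ, true_and] at *
    exact h ω hω
  · exact fun ω _ _ => hp ω

lemma fpr_fst (p : Ω → ℝ) (A : Ω → S) (B : Ω → T) (a : S) :
    fpr p A a = ∑ b : T, fpr p (fun ω => (A ω, B ω)) (a, b) := by
  simp_rw [fpr_eq_sum_ite]
  rw [Finset.sum_comm]
  apply Finset.sum_congr rfl
  intro ω _
  by_cases h : A ω = a <;> simp [Prod.ext_iff, h]

lemma gibbs {ι : Type*} [Fintype ι] (a b : ι → ℝ) (ha : ∀ i, 0 ≤ a i) (hb : ∀ i, 0 ≤ b i)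
    (hab : ∀ i, a i ≠ 0 → b i ≠ 0) (ha1 : ∑ i, a i = 1) (hb1 : ∑ i, b i ≤ 1) :
    ∑ i, a i * (Real.logb 2 (b i) - Real.logb 2 (a i)) ≤ 0 := by
  have hlog2 : (0:ℝ) < Real.log 2 := Real.log_pos one_lt_two
  have key : ∀ i, a i * (Real.logb 2 (b i) - Real.logb 2 (a i)) ≤ (b i - a i) / Real.log 2 := by
    intro i
    rcases eq_or_lt_of_le (ha i) with h0 | h0
    · rw [← h0, zero_mul, sub_zero]
      exact div_nonneg (hb i) hlog2.le
    · have hbi : 0 < b i := (hb i).lt_of_ne (Ne.symm (hab i h0.ne'))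
      have hlog : Real.logb 2 (b i) - Real.logb 2 (a i)
          = Real.log (b i / a i) / Real.log 2 := by
        rw [Real.log_div hbi.ne' h0.ne', Real.logb, Real.logb, div_sub_div_same]
      rw [hlog]
      have h2 : Real.log (b i / a i) ≤ b i / a i - 1 :=
        Real.log_le_sub_one_of_pos (by positivity)
      calc a i * (Real.log (b i / a i) / Real.log 2)
          ≤ a i * ((b i / a i - 1) / Real.log 2) := by
            apply mul_le_mul_of_nonneg_left _ h0.le
            exact (div_le_div_iff_of_pos_right hlog2).mpr h2
        _ = (b i - a i) / Real.log 2 := by field_simp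
  calc ∑ i, a i * (Real.logb 2 (b i) - Real.logb 2 (a i))
      ≤ ∑ i, (b i - a i) / Real.log 2 := Finset.sum_le_sum fun i _ => key i
    _ = (∑ i, b i - 1) / Real.log 2 := by
        rw [← Finset.sum_div, Finset.sum_sub_distrib, ha1]
    _ ≤ 0 := div_nonpos_of_nonpos_of_nonneg (by linarith) hlog2.le


lemma sum3 (f : S → T → U → ℝ) :
    ∑ s : S × T × U, f s.1 s.2.1 s.2.2 = ∑ z : U, ∑ x : S, ∑ y : T, f x y z := by
  rw [Fintype.sum_prod_type]
  simp_rw [Fintype.sum_prod_type]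
  calc ∑ x, ∑ y, ∑ z, f x y z
      = ∑ x, ∑ z, ∑ y, f x y z := Finset.sum_congr rfl fun x _ => Finset.sum_comm
    _ = ∑ z, ∑ x, ∑ y, f x y z := Finset.sum_comm

lemma ssa (p : Ω → ℝ) (hp : ∀ ω, 0 ≤ p ω) (hp1 : ∑ ω, p ω = 1)
    (X : Ω → S) (Y : Ω → T) (Z : Ω → U) :
    shEnt p (fun ω => (X ω, Y ω, Z ω)) + shEnt p Z
      ≤ shEnt p (fun ω => (X ω, Z ω)) + shEnt p (fun ω => (Y ω, Z ω)) := by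
  set F : S × T × U → ℝ := fpr p (fun ω => (X ω, Y ω, Z ω)) with hF
  set pXZ : S × U → ℝ := fpr p (fun ω => (X ω, Z ω)) with hpXZ
  set pYZ : T × U → ℝ := fpr p (fun ω => (Y ω, Z ω)) with hpYZ
  set pZ : U → ℝ := fpr p Z with hpZ
  set b : S × T × U → ℝ :=
    fun s => if pZ s.2.2 = 0 then 0
      else pXZ (s.1, s.2.2) * pYZ (s.2.1, s.2.2) / pZ s.2.2 with hb
  have hF0 : ∀ s, 0 ≤ F s := fun s => fpr_nonneg p hp _ s
  have hXZ0 : ∀ v, 0 ≤ pXZ v := fun v => fpr_nonneg p hp _ v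
  have hYZ0 : ∀ v, 0 ≤ pYZ v := fun v => fpr_nonneg p hp _ v
  have hZ0 : ∀ v, 0 ≤ pZ v := fun v => fpr_nonneg p hp _ v
  have hXZ : ∀ x z, pXZ (x, z) = ∑ y, F (x, y, z) := by
    intro x z
    rw [hpXZ, fpr_fst p (fun ω => (X ω, Z ω)) Y (x, z), hF]
    exact Finset.sum_congr rfl fun y _ => fpr_congr p fun ω => by
      simp only [Prod.ext_iff]; tauto
  have hYZ : ∀ y z, pYZ (y, z) = ∑ x, F (x, y, z) := by
    intro y z
    rw [hpYZ, fpr_fst p (fun ω => (Y ω, Z ω)) X (y, z), hF]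
    exact Finset.sum_congr rfl fun x _ => fpr_congr p fun ω => by
      simp only [Prod.ext_iff]; tauto
  have hZ3 : ∀ z, pZ z = ∑ x, ∑ y, F (x, y, z) := by
    intro z
    rw [hpZ, fpr_fst p Z (fun ω => (X ω, Y ω)) z, Fintype.sum_prod_type, hF]
    exact Finset.sum_congr rfl fun x _ => Finset.sum_congr rfl fun y _ =>
      fpr_congr p fun ω => by simp only [Prod.ext_iff]; tauto
  have hle1 : ∀ x y z, F (x, y, z) ≤ pXZ (x, z) := by
    intro x y z
    rw [hF, hpXZ]
    exact fpr_mono p hp fun ω h => by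
      simp only [Prod.ext_iff] at h ⊢; tauto
  have hle2 : ∀ x y z, F (x, y, z) ≤ pYZ (y, z) := by
    intro x y z
    rw [hF, hpYZ]
    exact fpr_mono p hp fun ω h => by
      simp only [Prod.ext_iff] at h ⊢; tauto
  have hle3 : ∀ x y z, F (x, y, z) ≤ pZ z := by
    intro x y z
    rw [hF, hpZ]
    exact fpr_mono p hp fun ω h => by
      simp only [Prod.ext_iff] at h; tauto
  have hb0 : ∀ s, 0 ≤ b s := by
    intro s
    rw [hb]
    dsimp only
    split
    · exact le_refl 0
    · exact div_nonneg (mul_nonneg (hXZ0 _) (hYZ0 _)) (hZ0 _)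
  have hab : ∀ s, F s ≠ 0 → b s ≠ 0 := by
    rintro ⟨x, y, z⟩ hs
    have h0 : 0 < F (x, y, z) := (hF0 _).lt_of_ne (Ne.symm hs)
    have h1 : 0 < pXZ (x, z) := lt_of_lt_of_le h0 (hle1 x y z)
    have h2 : 0 < pYZ (y, z) := lt_of_lt_of_le h0 (hle2 x y z)
    have h3 : 0 < pZ z := lt_of_lt_of_le h0 (hle3 x y z)
    rw [hb]
    dsimp only
    rw [if_neg h3.ne']
    positivity
  have hF1 : ∑ s, F s = 1 := by rw [hF, sum_fpr, hp1]
  have hzb : ∀ z, (∑ x, ∑ y, b (x, y, z)) ≤ pZ z := by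
    intro z
    by_cases hz : pZ z = 0
    · have ebv : ∀ x : S, ∀ y : T, b (x, y, z) = 0 := fun x y => by
        rw [hb]; dsimp only; rw [if_pos hz]
      simp only [ebv, Finset.sum_const_zero]
      exact hZ0 z
    · have ebv : ∀ x : S, ∀ y : T, b (x, y, z) = pXZ (x, z) * pYZ (y, z) / pZ z := fun x y => by
        rw [hb]; dsimp only; rw [if_neg hz]
      have h1 : ∑ y, pYZ (y, z) = pZ z := by
        simp_rw [hYZ]
        rw [Finset.sum_comm, ← hZ3]
      have h2 : ∑ x, pXZ (x, z) = pZ z := by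
        simp_rw [hXZ]
        rw [← hZ3]
      have e : ∑ x, ∑ y, b (x, y, z)
          = (∑ x, pXZ (x, z)) * (∑ y, pYZ (y, z)) / pZ z := by
        rw [Finset.sum_mul, Finset.sum_div]
        refine Finset.sum_congr rfl fun x _ => ?_
        simp only [ebv]
        rw [← Finset.sum_div, ← Finset.mul_sum]
      rw [e, h1, h2, mul_div_assoc, div_self hz, mul_one]
  have hb1 : ∑ s, b s ≤ 1 := by
    have e := sum3 (fun x y z => b (x, y, z))
    simp only [Prod.mk.eta] at e
    calc ∑ s, b s = ∑ z, ∑ x, ∑ y, b (x, y, z) := e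
      _ ≤ ∑ z, pZ z := Finset.sum_le_sum fun z _ => hzb z
      _ = 1 := by rw [hpZ, sum_fpr, hp1]
  have key := gibbs F b hF0 hb0 hab hF1 hb1
  have eXYZ : shEnt p (fun ω => (X ω, Y ω, Z ω)) = -∑ s, F s * Real.logb 2 (F s) := by
    rw [shEnt_eq, ← hF]
  have eZ : shEnt p Z = -∑ s : S × T × U, F s * Real.logb 2 (pZ s.2.2) := by
    rw [shEnt_eq, ← hpZ]
    congr 1
    have e := sum3 (fun x y z => F (x, y, z) * Real.logb 2 (pZ z))
    simp only [Prod.mk.eta] at e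
    rw [e]
    exact Finset.sum_congr rfl fun z _ => by
      simp_rw [← Finset.sum_mul]
      rw [← hZ3]
  have eXZ : shEnt p (fun ω => (X ω, Z ω))
      = -∑ s : S × T × U, F s * Real.logb 2 (pXZ (s.1, s.2.2)) := by
    rw [shEnt_eq, ← hpXZ]
    congr 1
    have e := sum3 (fun x y z => F (x, y, z) * Real.logb 2 (pXZ (x, z)))
    simp only [Prod.mk.eta] at e
    rw [e, Fintype.sum_prod_type, Finset.sum_comm]
    exact Finset.sum_congr rfl fun z _ => Finset.sum_congr rfl fun x _ => by
      rw [← Finset.sum_mul, ← hXZ]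
  have eYZ : shEnt p (fun ω => (Y ω, Z ω))
      = -∑ s : S × T × U, F s * Real.logb 2 (pYZ (s.2.1, s.2.2)) := by
    rw [shEnt_eq, ← hpYZ]
    congr 1
    have e := sum3 (fun x y z => F (x, y, z) * Real.logb 2 (pYZ (y, z)))
    simp only [Prod.mk.eta] at e
    rw [e, Fintype.sum_prod_type, Finset.sum_comm]
    refine Finset.sum_congr rfl fun z _ => ?_
    rw [Finset.sum_comm]
    exact Finset.sum_congr rfl fun y _ => by
      rw [← Finset.sum_mul, ← hYZ]
  have expand : ∀ s : S × T × U, F s * (Real.logb 2 (b s) - Real.logb 2 (F s))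
      = F s * (Real.logb 2 (pXZ (s.1, s.2.2)) + Real.logb 2 (pYZ (s.2.1, s.2.2))
          - Real.logb 2 (pZ s.2.2) - Real.logb 2 (F s)) := by
    rintro ⟨x, y, z⟩
    rcases eq_or_lt_of_le (hF0 (x, y, z)) with h0 | h0
    · rw [← h0, zero_mul, zero_mul]
    · have h1 : 0 < pXZ (x, z) := lt_of_lt_of_le h0 (hle1 x y z)
      have h2 : 0 < pYZ (y, z) := lt_of_lt_of_le h0 (hle2 x y z)
      have h3 : 0 < pZ z := lt_of_lt_of_le h0 (hle3 x y z)
      have hbv : b (x, y, z) = pXZ (x, z) * pYZ (y, z) / pZ z := by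
        rw [hb]; dsimp only; rw [if_neg h3.ne']
      congr 1
      rw [hbv, Real.logb_div (by positivity) h3.ne', Real.logb_mul h1.ne' h2.ne']
  have e2 : ∑ s, F s * (Real.logb 2 (b s) - Real.logb 2 (F s))
      = (∑ s : S × T × U, F s * Real.logb 2 (pXZ (s.1, s.2.2)))
        + (∑ s : S × T × U, F s * Real.logb 2 (pYZ (s.2.1, s.2.2)))
        - (∑ s : S × T × U, F s * Real.logb 2 (pZ s.2.2))
        - (∑ s : S × T × U, F s * Real.logb 2 (F s)) := by
    rw [← Finset.sum_add_distrib, ← Finset.sum_sub_distrib, ← Finset.sum_sub_distrib]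
    exact Finset.sum_congr rfl fun s _ => by rw [expand s]; ring
  linarith [key, e2, eXYZ, eZ, eXZ, eYZ]

lemma shEnt_le_logb_card (p : Ω → ℝ) (hp : ∀ ω, 0 ≤ p ω) (hp1 : ∑ ω, p ω = 1)
    (X : Ω → S) [Nonempty S] :
    shEnt p X ≤ Real.logb 2 (Fintype.card S) := by
  have hN : (0:ℝ) < Fintype.card S := by
    exact_mod_cast Fintype.card_pos
  have key := gibbs (fpr p X) (fun _ => ((Fintype.card S : ℝ))⁻¹)
    (fpr_nonneg p hp X) (fun _ => by positivity) (fun _ _ => by positivity)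
    (by rw [sum_fpr, hp1])
    (by rw [Finset.sum_const, Finset.card_univ, nsmul_eq_mul, mul_inv_cancel₀ hN.ne'])
  have e : ∑ s, fpr p X s * (Real.logb 2 ((Fintype.card S : ℝ))⁻¹
      - Real.logb 2 (fpr p X s))
      = -Real.logb 2 (Fintype.card S) - ∑ s, fpr p X s * Real.logb 2 (fpr p X s) := by
    simp_rw [mul_sub]
    rw [Finset.sum_sub_distrib, ← Finset.sum_mul, sum_fpr, hp1, one_mul, Real.logb_inv]
  rw [e] at key
  rw [shEnt_eq]
  linarith

end Aux

variable {n : ℕ} {S : Fin n → Type*} [∀ i, Fintype (S i)] [∀ i, DecidableEq (S i)]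

section MainAux

variable {n : ℕ} {S : Fin n → Type*} [∀ i, Fintype (S i)] [∀ i, DecidableEq (S i)]

lemma restrict_eq_iff (X : ∀ i, Ω → S i) (γ : Finset (Fin n)) (ω ω' : Ω) :
    restrict X γ ω = restrict X γ ω' ↔ ∀ i ∈ γ, X i ω = X i ω' := by
  constructor
  · intro h i hi
    exact congrFun h ⟨i, hi⟩
  · intro h
    funext i
    exact h i.1 i.2

lemma subEnt_mono (p : Ω → ℝ) (hp : ∀ ω, 0 ≤ p ω) (X : ∀ i, Ω → S i)
    {γ δ : Finset (Fin n)} (h : γ ⊆ δ) : subEnt p X γ ≤ subEnt p X δ :=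
  shEnt_mono p hp _ _ fun ω ω' hδ => (restrict_eq_iff X γ ω ω').2
    fun i hi => (restrict_eq_iff X δ ω ω').1 hδ i (h hi)

lemma subEnt_singleton (p : Ω → ℝ) (hp : ∀ ω, 0 ≤ p ω) (X : ∀ i, Ω → S i) (i : Fin n) :
    subEnt p X {i} = shEnt p (X i) :=
  shEnt_congr_s13 p hp _ _ fun ω ω' => by
    rw [restrict_eq_iff]
    simp

lemma subEnt_submodular (p : Ω → ℝ) (hp : ∀ ω, 0 ≤ p ω) (hp1 : ∑ ω, p ω = 1)
    (X : ∀ i, Ω → S i) {A B : Finset (Fin n)} {j : Fin n} (hAB : A ⊆ B) (hj : j ∉ B) :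
    subEnt p X (insert j B) + subEnt p X A ≤ subEnt p X (insert j A) + subEnt p X B := by
  have h1 : subEnt p X (insert j A) = shEnt p (fun ω => (X j ω, restrict X A ω)) := by
    apply shEnt_congr_s13 p hp
    intro ω ω'
    simp only [restrict_eq_iff, Prod.ext_iff]
    constructor
    · intro h
      exact ⟨h j (mem_insert_self _ _), fun i hi => h i (mem_insert_of_mem hi)⟩
    · rintro ⟨hj', hA⟩ i hi
      rcases mem_insert.1 hi with rfl | hi
      · exact hj'
      · exact hA i hi
  have h2 : subEnt p X B = shEnt p (fun ω => (restrict X (B \ A) ω, restrict X A ω)) := by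
    apply shEnt_congr_s13 p hp
    intro ω ω'
    simp only [restrict_eq_iff, Prod.ext_iff]
    constructor
    · intro h
      exact ⟨fun i hi => h i (mem_sdiff.1 hi).1, fun i hi => h i (hAB hi)⟩
    · rintro ⟨h1', h2'⟩ i hi
      by_cases hiA : i ∈ A
      · exact h2' i hiA
      · exact h1' i (mem_sdiff.2 ⟨hi, hiA⟩)
  have h3 : subEnt p X (insert j B)
      = shEnt p (fun ω => (X j ω, restrict X (B \ A) ω, restrict X A ω)) := by
    apply shEnt_congr_s13 p hp
    intro ω ω'
    simp only [restrict_eq_iff, Prod.ext_iff]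
    constructor
    · intro h
      exact ⟨h j (mem_insert_self _ _),
        fun i hi => h i (mem_insert_of_mem (mem_sdiff.1 hi).1),
        fun i hi => h i (mem_insert_of_mem (hAB hi))⟩
    · rintro ⟨hj', h1', h2'⟩ i hi
      rcases mem_insert.1 hi with rfl | hi
      · exact hj'
      · by_cases hiA : i ∈ A
        · exact h2' i hiA
        · exact h1' i (mem_sdiff.2 ⟨hi, hiA⟩)
  have h4 : subEnt p X A = shEnt p (restrict X A) := rfl
  rw [h1, h2, h3, h4]
  exact ssa p hp hp1 (X j) (restrict X (B \ A)) (restrict X A)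

lemma subEnt_chain (p : Ω → ℝ) (hp : ∀ ω, 0 ≤ p ω) (hp1 : ∑ ω, p ω = 1)
    (X : ∀ i, Ω → S i) (γ : Finset (Fin n)) :
    ∑ j ∈ γ, (subEnt p X univ - subEnt p X (univ.erase j))
      ≤ subEnt p X univ - subEnt p X (univ \ γ) := by
  induction γ using Finset.induction_on with
  | empty => simp
  | @insert j γ hj ih =>
    rw [Finset.sum_insert hj]
    have hmem : j ∈ univ \ γ := mem_sdiff.2 ⟨mem_univ j, hj⟩
    have hAB : univ \ insert j γ ⊆ univ.erase j := by
      intro i hi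
      rw [mem_sdiff, mem_insert] at hi
      exact mem_erase.2 ⟨fun h => hi.2 (Or.inl h), mem_univ i⟩
    have hj2 : j ∉ univ.erase j := notMem_erase j univ
    have hsub := subEnt_submodular p hp hp1 X hAB hj2
    rw [insert_erase (mem_univ j)] at hsub
    have hins : insert j (univ \ insert j γ) = univ \ γ := by
      ext i
      by_cases h : i = j <;> simp [h, hj]
    rw [hins] at hsub
    linarith

end MainAux

/-- if `Ω(X^n) ≥ 0`, then for every subset `γ` with `|γ| = m`
(`1 ≤ m ≤ n-1`) one has `C(X^γ) ≥ Ω(X^n) - (n-m-1)·log|𝒳|`, where `|𝒳|` is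
the maximum alphabet cardinality (logarithm base 2). -/
theorem totCorr_lower_bound_of_oInfo_nonneg
    (p : Ω → ℝ) (hp : ∀ ω, 0 ≤ p ω) (hp1 : ∑ ω, p ω = 1)
    (X : ∀ i, Ω → S i) (m : ℕ) (hm1 : 1 ≤ m) (hm2 : m ≤ n - 1)
    (hΩ : 0 ≤ oInfo p X Finset.univ)
    (γ : Finset (Fin n)) (hγ : γ.card = m) :
    totCorr p X γ
      ≥ oInfo p X Finset.univ
        - ((n : ℝ) - (m : ℝ) - 1) *
            Real.logb 2 ((Finset.univ.sup fun i => Fintype.card (S i) : ℕ) : ℝ) := by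
  classical
  set L := Real.logb 2 ((Finset.univ.sup fun i => Fintype.card (S i) : ℕ) : ℝ) with hL
  have hΩne : Nonempty Ω := by
    by_contra h
    rw [not_nonempty_iff] at h
    rw [Finset.univ_eq_empty, Finset.sum_empty] at hp1
    exact one_ne_zero hp1.symm
  have hSne : ∀ i, Nonempty (S i) := fun i => ⟨X i (Classical.arbitrary Ω)⟩
  have hnm : m + 1 ≤ n := by omega
  have hcard : ∀ i : Fin n, (1:ℕ) ≤ Fintype.card (S i) := fun i => @Fintype.card_pos _ _ (hSne i)
  have hHL : ∀ i : Fin n, shEnt p (X i) ≤ L := by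
    intro i
    haveI := hSne i
    refine (shEnt_le_logb_card p hp hp1 (X i)).trans ?_
    rw [hL]
    apply Real.logb_le_logb_of_le one_lt_two
    · exact_mod_cast hcard i
    · exact_mod_cast Finset.le_sup (f := fun i => Fintype.card (S i)) (Finset.mem_univ i)
  have hL0 : 0 ≤ L := by
    rw [hL]
    apply Real.logb_nonneg one_lt_two
    have h1 : (1:ℕ) ≤ univ.sup fun i => Fintype.card (S i) :=
      le_trans (hcard ⟨0, by omega⟩) (Finset.le_sup (f := fun i => Fintype.card (S i)) (mem_univ (⟨0, by omega⟩ : Fin n)))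
    exact_mod_cast h1
  set δ : Finset (Fin n) := univ \ γ with hδ
  have hδcard : δ.card = n - m := by
    rw [hδ, Finset.card_sdiff_of_subset (Finset.subset_univ γ), hγ, Finset.card_univ, Fintype.card_fin]
  have hδne : δ.Nonempty := Finset.card_pos.1 (by omega)
  obtain ⟨i0, hi0⟩ := hδne
  have hCδ : totCorr p X δ ≤ ((n - m - 1 : ℕ) : ℝ) * L := by
    have h1 : shEnt p (X i0) ≤ subEnt p X δ := by
      rw [← subEnt_singleton p hp X i0]
      exact subEnt_mono p hp X (Finset.singleton_subset_iff.2 hi0)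
    have h2 : ∑ i ∈ δ, shEnt p (X i) = shEnt p (X i0) + ∑ i ∈ δ.erase i0, shEnt p (X i) :=
      (Finset.add_sum_erase δ _ hi0).symm
    have h3 : ∑ i ∈ δ.erase i0, shEnt p (X i) ≤ ((n - m - 1 : ℕ) : ℝ) * L := by
      have hc : (δ.erase i0).card = n - m - 1 := by rw [Finset.card_erase_of_mem hi0, hδcard]
      calc ∑ i ∈ δ.erase i0, shEnt p (X i) ≤ (δ.erase i0).card • L :=
          Finset.sum_le_card_nsmul _ _ L fun i _ => hHL i
        _ = ((n - m - 1 : ℕ) : ℝ) * L := by rw [hc, nsmul_eq_mul]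
    have e3 : totCorr p X δ = (∑ i ∈ δ, shEnt p (X i)) - subEnt p X δ := rfl
    linarith
  have hsplit : ∑ j ∈ univ \ γ, (subEnt p X univ - subEnt p X (univ.erase j))
      + ∑ j ∈ γ, (subEnt p X univ - subEnt p X (univ.erase j))
      = ∑ j : Fin n, (subEnt p X univ - subEnt p X (univ.erase j)) :=
    Finset.sum_sdiff (Finset.subset_univ γ)
  rw [← hδ] at hsplit
  have hc1 := subEnt_chain p hp hp1 X γ
  rw [← hδ] at hc1
  have hc2 := subEnt_chain p hp hp1 X δ
  have hδδ : univ \ δ = γ := by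
    rw [hδ]
    ext i
    simp
  rw [hδδ] at hc2
  have hsum : ∑ i ∈ δ, shEnt p (X i) + ∑ i ∈ γ, shEnt p (X i) = ∑ i : Fin n, shEnt p (X i) := by
    rw [hδ]
    exact Finset.sum_sdiff (Finset.subset_univ γ)
  have e1 : oInfo p X Finset.univ
      = ((∑ i : Fin n, shEnt p (X i)) - subEnt p X Finset.univ)
        - (subEnt p X Finset.univ
          - ∑ j : Fin n, (subEnt p X Finset.univ - subEnt p X (Finset.univ.erase j))) := rfl
  have e2 : totCorr p X γ = (∑ i ∈ γ, shEnt p (X i)) - subEnt p X γ := rfl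
  have e3 : totCorr p X δ = (∑ i ∈ δ, shEnt p (X i)) - subEnt p X δ := rfl
  have hcast : ((n - m - 1 : ℕ) : ℝ) = (n : ℝ) - m - 1 := by
    rw [Nat.sub_sub, Nat.cast_sub (by omega : m + 1 ≤ n)]
    push_cast
    ring
  rw [hcast] at hCδ
  rw [ge_iff_le]
  linarith [hCδ, hsplit, hc1, hc2, hsum, e1, e2, e3]
end
end
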